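/- Let G be a simple undirected connected graph with n ≥ 2 vertices and α ∈ [0,1]. Then the α-distance Estrada index satisfies DEE_α(G) ≤ e^{2αW(G)/n} · ( n − 1 − ς_α(G) + e^{ς_α(G)} ). -/

import Mathlib

open Finset Matrix Polynomial Real

/-- Distance matrix of a graph on `Fin n`: `(i,j)` entry is the graph distance. -/
noncomputable def distMatrix {n : ℕ} (G : SimpleGraph (Fin n)) : Matrix (Fin n) (Fin n) ℝ :=
  fun i j => (G.dist i j : ℝ)

/-- Transmission of a vertex: sum of distances to all other vertices. -/
noncomputable def transmission {n : ℕ} (G : SimpleGraph (Fin n)) (i : Fin n) : ℝ :=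
  ∑ j, (G.dist i j : ℝ)

/-- The α-distance matrix `D_α(G) = α·Tr(G) + (1-α)·D(G)`. -/
noncomputable def alphaDistMatrix {n : ℕ} (G : SimpleGraph (Fin n)) (α : ℝ) : Matrix (Fin n) (Fin n) ℝ :=
  α • Matrix.diagonal (transmission G) + (1 - α) • distMatrix G

/-- Wiener index `W(G) = (1/2)·∑_{i≠j} d(v_i,v_j)`. -/
noncomputable def wiener {n : ℕ} (G : SimpleGraph (Fin n)) : ℝ :=
  (1 / 2) * ∑ i, ∑ j, (G.dist i j : ℝ)

/-- Frobenius norm of a real matrix. -/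
noncomputable def frobNorm {n : ℕ} (M : Matrix (Fin n) (Fin n) ℝ) : ℝ :=
  Real.sqrt (∑ i, ∑ j, (M i j) ^ 2)

/-- trace equals sum of eigenvalues for real symmetric matrices -/
lemma trace_eq_sum_eigs {n : ℕ} {A : Matrix (Fin n) (Fin n) ℝ} (hA : A.IsHermitian) :
    A.trace = ∑ i, hA.eigenvalues i := by
  conv_lhs => rw [hA.spectral_theorem]
  rw [Unitary.conjStarAlgAut_apply, Matrix.trace_mul_cycle]
  have h1 : (star (hA.eigenvectorUnitary : Matrix (Fin n) (Fin n) ℝ)) *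
      (hA.eigenvectorUnitary : Matrix (Fin n) (Fin n) ℝ) = 1 := by
    simpa using Unitary.coe_star_mul_self hA.eigenvectorUnitary
  rw [h1, Matrix.one_mul, Matrix.trace_diagonal]
  simp

/-- pointwise bound: `exp t ≤ exp |t| - |t| + t` -/
lemma exp_le_abs (t : ℝ) : Real.exp t ≤ Real.exp |t| - |t| + t := by
  rcases le_or_gt 0 t with h | h
  · rw [abs_of_nonneg h]; ring_nf; exact le_refl _
  · rw [abs_of_neg h]
    have h2 : Real.sinh t < t := Real.sinh_lt_self_iff.2 h
    rw [Real.sinh_eq] at h2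
    nlinarith

/-- superadditivity of `x ↦ exp x - 1 - x` summed over nonnegative values -/
lemma sum_exp_sub_le {ι : Type*} (s : Finset ι) (g : ι → ℝ) (hg : ∀ i ∈ s, 0 ≤ g i) :
    ∑ i ∈ s, (Real.exp (g i) - 1 - g i) ≤
      Real.exp (∑ i ∈ s, g i) - 1 - ∑ i ∈ s, g i := by
  induction s using Finset.cons_induction with
  | empty => simp
  | cons a s ha ih =>
    simp only [Finset.sum_cons]
    have h1 : 0 ≤ g a := hg a (Finset.mem_cons_self _ _)
    have h2 : 0 ≤ ∑ i ∈ s, g i :=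
      Finset.sum_nonneg fun i hi => hg i (Finset.mem_cons_of_mem hi)
    have ih' := ih fun i hi => hg i (Finset.mem_cons_of_mem hi)
    have hmul : 0 ≤ (Real.exp (g a) - 1) * (Real.exp (∑ i ∈ s, g i) - 1) :=
      mul_nonneg (sub_nonneg.2 (Real.one_le_exp h1))
        (sub_nonneg.2 (Real.one_le_exp h2))
    nlinarith [Real.exp_add (g a) (∑ i ∈ s, g i)]

theorem stmt_18 {n : ℕ} (hn : 2 ≤ n) (G : SimpleGraph (Fin n)) (hG : G.Connected)
    (α : ℝ) (hα : α ∈ Set.Icc (0 : ℝ) 1)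
    (hA : (alphaDistMatrix G α).IsHermitian) :
    (∑ i, Real.exp (hA.eigenvalues i)) ≤
      Real.exp (2 * α * wiener G / n) *
        ((n : ℝ) - 1 - (∑ i, |hA.eigenvalues i - 2 * α * wiener G / n|) +
          Real.exp (∑ i, |hA.eigenvalues i - 2 * α * wiener G / n|)) := by
  have hn0 : (n : ℝ) ≠ 0 := by positivity
  set c : ℝ := 2 * α * wiener G / n with hc
  set σ : Fin n → ℝ := hA.eigenvalues with hσ
  set S : ℝ := ∑ i, |σ i - c| with hS
  -- trace computation
  have htrace : (alphaDistMatrix G α).trace = 2 * α * wiener G := by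
    rw [Matrix.trace]
    have : ∀ i : Fin n, (alphaDistMatrix G α).diag i = α * transmission G i := by
      intro i
      simp [alphaDistMatrix, Matrix.diag, distMatrix, Matrix.diagonal_apply_eq,
        SimpleGraph.dist_self]
    rw [Finset.sum_congr rfl fun i _ => this i]
    simp only [← Finset.mul_sum, wiener, transmission]
    ring
  have hsum : ∑ i, σ i = 2 * α * wiener G := by
    rw [hσ, ← trace_eq_sum_eigs hA, htrace]
  have hsum0 : ∑ i, (σ i - c) = 0 := by
    rw [Finset.sum_sub_distrib, hsum, Finset.sum_const, Finset.card_univ,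
      Fintype.card_fin, nsmul_eq_mul, hc]
    field_simp
    ring
  -- pointwise bound and summation
  have step1 : (∑ i, Real.exp (σ i)) ≤
      Real.exp c * ∑ i, (Real.exp |σ i - c| - |σ i - c| + (σ i - c)) := by
    rw [Finset.mul_sum]
    apply Finset.sum_le_sum
    intro i _
    have : Real.exp (σ i) = Real.exp c * Real.exp (σ i - c) := by
      rw [← Real.exp_add]; ring_nf
    rw [this]
    exact mul_le_mul_of_nonneg_left (exp_le_abs _) (Real.exp_pos c).le
  have step2 : ∑ i, (Real.exp |σ i - c| - |σ i - c| + (σ i - c)) =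
      (∑ i, Real.exp |σ i - c|) - S := by
    rw [Finset.sum_add_distrib, Finset.sum_sub_distrib, hsum0, hS, add_zero]
  have step3 : (∑ i, Real.exp |σ i - c|) ≤ (n : ℝ) - 1 + Real.exp S := by
    have h := sum_exp_sub_le Finset.univ (fun i => |σ i - c|)
      (fun i _ => abs_nonneg _)
    simp only [Finset.sum_sub_distrib, Finset.sum_const, Finset.card_univ,
      Fintype.card_fin, nsmul_eq_mul, mul_one, ← hS] at h
    linarith
  calc (∑ i, Real.exp (σ i))
      ≤ Real.exp c * ((∑ i, Real.exp |σ i - c|) - S) := by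
        rw [← step2]; exact step1
    _ ≤ Real.exp c * ((n : ℝ) - 1 + Real.exp S - S) := by
        apply mul_le_mul_of_nonneg_left _ (Real.exp_pos c).le
        linarith
    _ = Real.exp c * ((n : ℝ) - 1 - S + Real.exp S) := by ring
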